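/- Let (Ω, F, P) be a probability space with a filtration (F_i)_{i ≥ 0}, b ∈ (1, 2], τ > 0, C ≥ 0, and let (D_i)_{i ≥ 1} be random variables such that each D_i is F_i-measurable, E[|D_i|^b] < ∞, and E[|D_i|^b | F_{i−1}] ≤ C almost surely for every i. Set Z_i = ψ_τ(D_i) − E[ψ_τ(D_i) | F_{i−1}]. Then M_n = Σ_{i=1}^n Z_i is a square-integrable martingale with respect to (F_n), and E[M_n²] ≤ n C τ^{2−b} for every n ≥ 1. -/

import Mathlib

open MeasureTheory Real

/-- The truncation function `ψ_τ(x) = max(−τ, min(x, τ))`. -/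
noncomputable def truncFun (τ : ℝ) (x : ℝ) : ℝ := max (-τ) (min x τ)

/-- Auxiliary lemma: martingale structure and variance bound for the compensated
sums of uniformly bounded random variables `ψ i` with second-moment bound `K`. -/
theorem trunc_martingale_aux {Ω : Type*} {mΩ : MeasurableSpace Ω} (μ : Measure Ω)
    [IsProbabilityMeasure μ] (ℱ : Filtration ℕ mΩ) (τ K : ℝ) (hτ : 0 ≤ τ) (hK : 0 ≤ K)
    (ψ : ℕ → Ω → ℝ)
    (hψm : ∀ i, StronglyMeasurable[ℱ (i + 1)] (ψ i))
    (hψb : ∀ i ω, |ψ i ω| ≤ τ)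
    (hψsq : ∀ i, ∫ ω, ψ i ω * ψ i ω ∂μ ≤ K) :
    Martingale (fun n ω => ∑ i ∈ Finset.range n, (ψ i ω - (μ[ψ i | ℱ i]) ω)) ℱ μ ∧
    (∀ n, MemLp (fun ω => ∑ i ∈ Finset.range n, (ψ i ω - (μ[ψ i | ℱ i]) ω)) 2 μ) ∧
    (∀ n, ∫ ω, (∑ i ∈ Finset.range n, (ψ i ω - (μ[ψ i | ℱ i]) ω)) ^ 2 ∂μ ≤ n * K) := by
  set Z : ℕ → Ω → ℝ := fun i ω => ψ i ω - (μ[ψ i | ℱ i]) ω with hZdef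
  set M : ℕ → Ω → ℝ := fun n ω => ∑ i ∈ Finset.range n, (ψ i ω - (μ[ψ i | ℱ i]) ω) with hMdef
  have hψsm0 : ∀ i, StronglyMeasurable (ψ i) := fun i => (hψm i).mono (ℱ.le _)
  have hψint : ∀ i, Integrable (ψ i) μ := by
    intro i
    refine (memLp_top_of_bound (hψsm0 i).aestronglyMeasurable τ
      (Filter.Eventually.of_forall fun ω => ?_)).integrable le_top
    simpa [Real.norm_eq_abs] using hψb i ω
  have hgint : ∀ i, Integrable (μ[ψ i | ℱ i]) μ := fun i => integrable_condExp
  have hgsm : ∀ i, StronglyMeasurable[ℱ i] (μ[ψ i | ℱ i]) := fun i => stronglyMeasurable_condExp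
  have hgsm0 : ∀ i, StronglyMeasurable (μ[ψ i | ℱ i]) := fun i => (hgsm i).mono (ℱ.le _)
  have hgbdd : ∀ i, ∀ᵐ ω ∂μ, |(μ[ψ i | ℱ i]) ω| ≤ τ := by
    intro i
    have hb : ∀ᵐ ω ∂μ, |ψ i ω| ≤ (τ.toNNReal : ℝ) := by
      refine Filter.Eventually.of_forall fun ω => ?_
      rw [Real.coe_toNNReal _ hτ]; exact hψb i ω
    filter_upwards [ae_bdd_condExp_of_ae_bdd (m := ℱ i) hb] with ω hω
    rwa [Real.coe_toNNReal _ hτ] at hω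
  have hZint : ∀ i, Integrable (Z i) μ := fun i => (hψint i).sub (hgint i)
  have hZsm : ∀ i, StronglyMeasurable (Z i) := fun i => (hψsm0 i).sub (hgsm0 i)
  have hZbdd : ∀ i, ∀ᵐ ω ∂μ, |Z i ω| ≤ 2 * τ := by
    intro i
    filter_upwards [hgbdd i] with ω hω
    calc |Z i ω| ≤ |ψ i ω| + |(μ[ψ i | ℱ i]) ω| := abs_sub _ _
      _ ≤ τ + τ := add_le_add (hψb i ω) hω
      _ = 2 * τ := by ring
  have hMint : ∀ n, Integrable (M n) μ := fun n => integrable_finset_sum _ fun i _ => hZint i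
  have hadp : StronglyAdapted ℱ M := by
    intro n
    refine Finset.stronglyMeasurable_fun_sum _ fun i hi => ?_
    have hi' : i + 1 ≤ n := Finset.mem_range.mp hi
    exact ((hψm i).mono (ℱ.mono hi')).sub
      ((hgsm i).mono (ℱ.mono (le_trans (Nat.le_succ i) hi')))
  have hMsm : ∀ n, StronglyMeasurable (M n) := fun n => (hadp n).mono (ℱ.le _)
  have hMbdd : ∀ n, ∀ᵐ ω ∂μ, |M n ω| ≤ n * (2 * τ) := by
    intro n
    filter_upwards [ae_all_iff.mpr hZbdd] with ω hω
    calc |M n ω| ≤ ∑ i ∈ Finset.range n, |Z i ω| := Finset.abs_sum_le_sum_abs _ _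
      _ ≤ ∑ _i ∈ Finset.range n, 2 * τ := Finset.sum_le_sum fun i _ => hω i
      _ = n * (2 * τ) := by simp [mul_comm]
  have hZcond : ∀ i, μ[Z i | ℱ i] =ᵐ[μ] 0 := by
    intro i
    have h1 : μ[Z i | ℱ i] =ᵐ[μ] μ[ψ i | ℱ i] - μ[μ[ψ i | ℱ i] | ℱ i] :=
      condExp_sub (hψint i) (hgint i) _
    have h2 : μ[μ[ψ i | ℱ i] | ℱ i] = μ[ψ i | ℱ i] :=
      condExp_of_stronglyMeasurable (ℱ.le i) (hgsm i) (hgint i)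
    filter_upwards [h1] with ω hω
    simp only [Pi.zero_apply]
    rw [hω, h2]
    simp
  have hMZ : ∀ n, M (n + 1) = M n + Z n := by
    intro n
    funext ω
    simp only [hMdef, hZdef, Pi.add_apply]
    rw [Finset.sum_range_succ]
  have hmart : Martingale M ℱ μ := by
    refine martingale_nat hadp hMint fun n => ?_
    rw [hMZ n]
    have h1 : μ[M n + Z n | ℱ n] =ᵐ[μ] μ[M n | ℱ n] + μ[Z n | ℱ n] :=
      condExp_add (hMint n) (hZint n) _
    have h2 : μ[M n | ℱ n] = M n :=
      condExp_of_stronglyMeasurable (ℱ.le n) (hadp n) (hMint n)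
    filter_upwards [h1, hZcond n] with ω hω hz
    rw [hω, h2]
    simp only [Pi.add_apply]
    rw [hz]
    simp
  refine ⟨hmart, ?_, ?_⟩
  · intro n
    show MemLp (M n) 2 μ
    refine MemLp.mono_exponent ?_ (le_top : (2 : ENNReal) ≤ ⊤)
    refine memLp_top_of_bound (hMsm n).aestronglyMeasurable (n * (2 * τ)) ?_
    filter_upwards [hMbdd n] with ω hω
    simpa [Real.norm_eq_abs] using hω
  · -- second moment of each increment
    have hgψint : ∀ i, Integrable (fun ω => (μ[ψ i | ℱ i]) ω * ψ i ω) μ := by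
      intro i
      refine Integrable.bdd_mul (c := τ) (hψint i) (hgsm0 i).aestronglyMeasurable ?_
      filter_upwards [hgbdd i] with ω hω
      simpa [Real.norm_eq_abs] using hω
    have hg2int : ∀ i, Integrable (fun ω => (μ[ψ i | ℱ i]) ω * (μ[ψ i | ℱ i]) ω) μ := by
      intro i
      refine Integrable.bdd_mul (c := τ) (hgint i) (hgsm0 i).aestronglyMeasurable ?_
      filter_upwards [hgbdd i] with ω hω
      simpa [Real.norm_eq_abs] using hω
    have hψ2int : ∀ i, Integrable (fun ω => ψ i ω * ψ i ω) μ := by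
      intro i
      refine Integrable.bdd_mul (c := τ) (hψint i) (hψsm0 i).aestronglyMeasurable ?_
      exact Filter.Eventually.of_forall fun ω => by simpa [Real.norm_eq_abs] using hψb i ω
    have hgψ : ∀ i, ∫ ω, (μ[ψ i | ℱ i]) ω * ψ i ω ∂μ
        = ∫ ω, (μ[ψ i | ℱ i]) ω * (μ[ψ i | ℱ i]) ω ∂μ := by
      intro i
      have hpull : μ[μ[ψ i | ℱ i] * ψ i | ℱ i] =ᵐ[μ] μ[ψ i | ℱ i] * μ[ψ i | ℱ i] :=
        condExp_mul_of_stronglyMeasurable_left (hgsm i) (hgψint i) (hψint i)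
      have h1 : ∫ ω, (μ[ψ i | ℱ i]) ω * ψ i ω ∂μ
          = ∫ ω, (μ[μ[ψ i | ℱ i] * ψ i | ℱ i]) ω ∂μ :=
        (integral_condExp (ℱ.le i)).symm
      rw [h1, integral_congr_ae hpull]
      rfl
    have hZ2int : ∀ i, Integrable (fun ω => Z i ω * Z i ω) μ := by
      intro i
      refine Integrable.bdd_mul (c := 2 * τ) (hZint i) (hZsm i).aestronglyMeasurable ?_
      filter_upwards [hZbdd i] with ω hω
      simpa [Real.norm_eq_abs] using hω
    have hZ2 : ∀ i, ∫ ω, Z i ω * Z i ω ∂μ ≤ K := by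
      intro i
      have hexp : (fun ω => Z i ω * Z i ω)
          = fun ω => ψ i ω * ψ i ω - (2 * ((μ[ψ i | ℱ i]) ω * ψ i ω)
              - (μ[ψ i | ℱ i]) ω * (μ[ψ i | ℱ i]) ω) := by
        funext ω
        simp only [hZdef]
        ring
      rw [hexp]
      have e1 : ∫ ω, (ψ i ω * ψ i ω - (2 * ((μ[ψ i | ℱ i]) ω * ψ i ω)
              - (μ[ψ i | ℱ i]) ω * (μ[ψ i | ℱ i]) ω)) ∂μ
          = (∫ ω, ψ i ω * ψ i ω ∂μ) - ∫ ω, (2 * ((μ[ψ i | ℱ i]) ω * ψ i ω)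
              - (μ[ψ i | ℱ i]) ω * (μ[ψ i | ℱ i]) ω) ∂μ :=
        integral_sub (hψ2int i) (((hgψint i).const_mul 2).sub (hg2int i))
      have e2 : ∫ ω, (2 * ((μ[ψ i | ℱ i]) ω * ψ i ω)
              - (μ[ψ i | ℱ i]) ω * (μ[ψ i | ℱ i]) ω) ∂μ
          = (∫ ω, 2 * ((μ[ψ i | ℱ i]) ω * ψ i ω) ∂μ)
              - ∫ ω, (μ[ψ i | ℱ i]) ω * (μ[ψ i | ℱ i]) ω ∂μ :=
        integral_sub ((hgψint i).const_mul 2) (hg2int i)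
      have e3 : ∫ ω, 2 * ((μ[ψ i | ℱ i]) ω * ψ i ω) ∂μ
          = 2 * ∫ ω, (μ[ψ i | ℱ i]) ω * ψ i ω ∂μ :=
        integral_const_mul 2 _
      have h1 := hψsq i
      have h4 := hgψ i
      have h2 : 0 ≤ ∫ ω, (μ[ψ i | ℱ i]) ω * (μ[ψ i | ℱ i]) ω ∂μ :=
        integral_nonneg fun ω => mul_self_nonneg _
      linarith
    have hMZint : ∀ n, Integrable (fun ω => M n ω * Z n ω) μ := by
      intro n
      refine Integrable.bdd_mul (c := n * (2 * τ)) (hZint n) (hMsm n).aestronglyMeasurable ?_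
      filter_upwards [hMbdd n] with ω hω
      simpa [Real.norm_eq_abs] using hω
    have hM2int : ∀ n, Integrable (fun ω => M n ω * M n ω) μ := by
      intro n
      refine Integrable.bdd_mul (c := n * (2 * τ)) (hMint n) (hMsm n).aestronglyMeasurable ?_
      filter_upwards [hMbdd n] with ω hω
      simpa [Real.norm_eq_abs] using hω
    have hcross : ∀ n, ∫ ω, M n ω * Z n ω ∂μ = 0 := by
      intro n
      have hpull : μ[M n * Z n | ℱ n] =ᵐ[μ] M n * μ[Z n | ℱ n] :=
        condExp_mul_of_stronglyMeasurable_left (hadp n) (hMZint n) (hZint n)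
      have h1 : ∫ ω, M n ω * Z n ω ∂μ = ∫ ω, (μ[M n * Z n | ℱ n]) ω ∂μ :=
        (integral_condExp (ℱ.le n)).symm
      have hzero : μ[M n * Z n | ℱ n] =ᵐ[μ] 0 := by
        filter_upwards [hpull, hZcond n] with ω hω hz
        rw [hω]
        simp only [Pi.mul_apply, Pi.zero_apply] at *
        rw [hz, mul_zero]
      rw [h1, integral_congr_ae hzero]
      simp
    intro n
    show ∫ ω, (M n ω) ^ 2 ∂μ ≤ n * K
    induction n with
    | zero => simp [hMdef]
    | succ n ih =>
      have hsplit : (fun ω => (M (n + 1) ω) ^ 2)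
          = fun ω => M n ω * M n ω + (2 * (M n ω * Z n ω) + Z n ω * Z n ω) := by
        funext ω
        rw [hMZ n]
        simp only [Pi.add_apply]
        ring
      have hM2 : ∫ ω, (M n ω) ^ 2 ∂μ = ∫ ω, M n ω * M n ω ∂μ := by
        congr 1; funext ω; ring
      rw [hM2] at ih
      have e0 : ∫ ω, (M (n + 1) ω) ^ 2 ∂μ
          = ∫ ω, (M n ω * M n ω + (2 * (M n ω * Z n ω) + Z n ω * Z n ω)) ∂μ := by rw [hsplit]
      have e1 : ∫ ω, (M n ω * M n ω + (2 * (M n ω * Z n ω) + Z n ω * Z n ω)) ∂μ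
          = (∫ ω, M n ω * M n ω ∂μ)
            + ∫ ω, (2 * (M n ω * Z n ω) + Z n ω * Z n ω) ∂μ :=
        integral_add (hM2int n) (((hMZint n).const_mul 2).add (hZ2int n))
      have e2 : ∫ ω, (2 * (M n ω * Z n ω) + Z n ω * Z n ω) ∂μ
          = (∫ ω, 2 * (M n ω * Z n ω) ∂μ) + ∫ ω, Z n ω * Z n ω ∂μ :=
        integral_add ((hMZint n).const_mul 2) (hZ2int n)
      have e3 : ∫ ω, 2 * (M n ω * Z n ω) ∂μ = 2 * ∫ ω, M n ω * Z n ω ∂μ :=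
        integral_const_mul 2 _
      have h1 := hZ2 n
      have h2 := hcross n
      have hcast : ((n + 1 : ℕ) : ℝ) = (n : ℝ) + 1 := by push_cast; ring
      rw [e0, e1, e2, e3, h2, hcast]
      linarith

/-- Truncated, conditionally centered heavy-tailed martingale differences:
`D i` stands for `D_{i+1}` (F_{i+1}-measurable) and `ℱ i` for `F_i`, so that
`M n = Σ_{i=1}^n Z_i = Σ_{i<n} (ψ_τ(D i) − E[ψ_τ(D i) | ℱ i])`. -/
theorem truncated_martingale_variance_bound
    {Ω : Type*} {mΩ : MeasurableSpace Ω} (μ : Measure Ω) [IsProbabilityMeasure μ]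
    (ℱ : Filtration ℕ mΩ)
    (b τ C : ℝ) (hb : b ∈ Set.Ioc (1 : ℝ) 2) (hτ : 0 < τ) (hC : 0 ≤ C)
    (D : ℕ → Ω → ℝ)
    (hmeas : ∀ i, Measurable[ℱ (i + 1)] (D i))
    (hint : ∀ i, Integrable (fun ω => |D i ω| ^ b) μ)
    (hcond : ∀ i, ∀ᵐ ω ∂μ, (μ[fun ω' => |D i ω'| ^ b | ℱ i]) ω ≤ C) :
    Martingale
      (fun n ω => ∑ i ∈ Finset.range n,
        (truncFun τ (D i ω) - (μ[fun ω' => truncFun τ (D i ω') | ℱ i]) ω)) ℱ μ ∧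
    (∀ n : ℕ,
      MemLp (fun ω => ∑ i ∈ Finset.range n,
        (truncFun τ (D i ω) - (μ[fun ω' => truncFun τ (D i ω') | ℱ i]) ω)) 2 μ) ∧
    (∀ n : ℕ, 1 ≤ n →
      ∫ ω, (∑ i ∈ Finset.range n,
          (truncFun τ (D i ω) - (μ[fun ω' => truncFun τ (D i ω') | ℱ i]) ω)) ^ 2 ∂μ
        ≤ n * C * τ ^ (2 - b)) := by
  obtain ⟨hb1, hb2⟩ := hb
  have hτK : (0 : ℝ) ≤ τ ^ (2 - b) := Real.rpow_nonneg hτ.le _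
  have hK : (0 : ℝ) ≤ C * τ ^ (2 - b) := mul_nonneg hC hτK
  -- basic facts about truncFun
  have htb : ∀ x : ℝ, |truncFun τ x| ≤ τ := by
    intro x
    rw [abs_le]
    constructor
    · exact le_max_left _ _
    · exact max_le (by linarith) (min_le_right _ _)
  have htabs : ∀ x : ℝ, |truncFun τ x| ≤ |x| := by
    intro x
    rw [abs_le]
    constructor
    · refine le_trans (le_min (neg_abs_le x) ?_) (le_max_right _ _)
      have : (0 : ℝ) ≤ |x| := abs_nonneg x
      linarith
    · refine max_le ?_ (le_trans (min_le_left _ _) (le_abs_self x))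
      have : (0 : ℝ) ≤ |x| := abs_nonneg x
      linarith
  -- pointwise bound for the square of the truncation
  have hkey : ∀ x : ℝ, truncFun τ x ^ 2 ≤ |x| ^ b * τ ^ (2 - b) := by
    intro x
    have h3 : truncFun τ x ^ 2 = |truncFun τ x| ^ b * |truncFun τ x| ^ (2 - b) := by
      rw [← Real.rpow_add' (abs_nonneg _) (by norm_num), show b + (2 - b) = (2 : ℝ) by ring,
        show ((2 : ℝ) = ((2 : ℕ) : ℝ)) by norm_num, Real.rpow_natCast, sq_abs]
    rw [h3]
    exact mul_le_mul (Real.rpow_le_rpow (abs_nonneg _) (htabs x) (by linarith))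
      (Real.rpow_le_rpow (abs_nonneg _) (htb x) (by linarith))
      (Real.rpow_nonneg (abs_nonneg _) _) (Real.rpow_nonneg (abs_nonneg _) _)
  -- measurability of the truncation
  have hψm : ∀ i, StronglyMeasurable[ℱ (i + 1)] (fun ω => truncFun τ (D i ω)) := by
    intro i
    exact (Measurable.max measurable_const ((hmeas i).min measurable_const)).stronglyMeasurable
  have hψsm0 : ∀ i, StronglyMeasurable (fun ω => truncFun τ (D i ω)) :=
    fun i => (hψm i).mono (ℱ.le _)
  -- second moment bound for the truncation
  have hDC : ∀ i, ∫ ω, |D i ω| ^ b ∂μ ≤ C := by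
    intro i
    have h1 : ∫ ω, |D i ω| ^ b ∂μ = ∫ ω, (μ[fun ω' => |D i ω'| ^ b | ℱ i]) ω ∂μ :=
      (integral_condExp (ℱ.le i)).symm
    rw [h1]
    calc ∫ ω, (μ[fun ω' => |D i ω'| ^ b | ℱ i]) ω ∂μ
        ≤ ∫ _ω, C ∂μ := integral_mono_ae integrable_condExp (integrable_const C) (hcond i)
      _ = C := by simp
  have hψsq : ∀ i, ∫ ω, truncFun τ (D i ω) * truncFun τ (D i ω) ∂μ ≤ C * τ ^ (2 - b) := by
    intro i
    have hψ2int : Integrable (fun ω => truncFun τ (D i ω) * truncFun τ (D i ω)) μ := by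
      have hψint : Integrable (fun ω => truncFun τ (D i ω)) μ := by
        refine (memLp_top_of_bound (hψsm0 i).aestronglyMeasurable τ
          (Filter.Eventually.of_forall fun ω => ?_)).integrable le_top
        simpa [Real.norm_eq_abs] using htb (D i ω)
      refine Integrable.bdd_mul (c := τ) hψint (hψsm0 i).aestronglyMeasurable ?_
      exact Filter.Eventually.of_forall fun ω => by simpa [Real.norm_eq_abs] using htb (D i ω)
    have hmono : ∫ ω, truncFun τ (D i ω) * truncFun τ (D i ω) ∂μ
        ≤ ∫ ω, |D i ω| ^ b * τ ^ (2 - b) ∂μ := by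
      refine integral_mono hψ2int ((hint i).mul_const _) fun ω => ?_
      have := hkey (D i ω)
      calc truncFun τ (D i ω) * truncFun τ (D i ω) = truncFun τ (D i ω) ^ 2 := by ring
        _ ≤ |D i ω| ^ b * τ ^ (2 - b) := hkey (D i ω)
    calc ∫ ω, truncFun τ (D i ω) * truncFun τ (D i ω) ∂μ
        ≤ ∫ ω, |D i ω| ^ b * τ ^ (2 - b) ∂μ := hmono
      _ = (∫ ω, |D i ω| ^ b ∂μ) * τ ^ (2 - b) := integral_mul_const _ _
      _ ≤ C * τ ^ (2 - b) := mul_le_mul_of_nonneg_right (hDC i) hτK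
  obtain ⟨h1, h2, h3⟩ := trunc_martingale_aux μ ℱ τ (C * τ ^ (2 - b)) hτ.le hK
    (fun i ω => truncFun τ (D i ω)) hψm (fun i ω => htb (D i ω)) hψsq
  refine ⟨h1, h2, fun n _ => ?_⟩
  have := h3 n
  rw [mul_assoc]
  exact this
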